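/- Let f : ℝ_{>0} → ℝ_{≥0} be a function such that M := sup_{ξ>0} f(ξ)/ξ < ∞ and f(ξ + ζ) ≥ f(ξ) + f(ζ) − f(ξ)·f(ζ) for all ξ, ζ > 0. Then the limit lim_{ζ→0⁺} f(ζ)/ζ exists and is finite. -/

import Mathlib

/-- Convergence lemma for almost superadditive functions. -/
theorem tendsto_div_of_superadditive (f : ℝ → ℝ) (hf0 : ∀ ξ > 0, 0 ≤ f ξ)
    (hM : ∃ M : ℝ, ∀ ξ > 0, f ξ / ξ ≤ M)
    (hsup : ∀ ξ > 0, ∀ ζ > 0, f ξ + f ζ - f ξ * f ζ ≤ f (ξ + ζ)) :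
    ∃ L : ℝ, Filter.Tendsto (fun ξ => f ξ / ξ) (nhdsWithin 0 (Set.Ioi 0)) (nhds L) := by
  obtain ⟨M, hMf⟩ := hM
  have hM0 : 0 ≤ M := le_trans (by simpa using hf0 1 one_pos) (by simpa using hMf 1 one_pos)
  have hM1 : (0:ℝ) < M + 1 := by linarith
  set δ : ℝ := 1 / (2 * (M + 1)) with hδdef
  have hδpos : 0 < δ := by positivity
  have hfM : ∀ ζ : ℝ, 0 < ζ → f ζ ≤ M * ζ := by
    intro ζ h1
    have := hMf ζ h1
    rw [div_le_iff₀ h1] at this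
    linarith
  have hfle : ∀ ζ : ℝ, 0 < ζ → ζ < δ → f ζ ≤ 1/2 := by
    intro ζ h1 h2
    have h3 : f ζ ≤ M * ζ := hfM ζ h1
    have h4 : M * ζ ≤ (M+1) * δ := by nlinarith
    have h5 : (M+1) * δ = 1/2 := by
      rw [hδdef]; field_simp
    linarith
  set g : ℝ → ℝ := fun ζ => -Real.log (1 - f ζ) with hg
  have hg0 : ∀ ζ : ℝ, 0 < ζ → ζ < δ → 0 ≤ g ζ := by
    intro ζ h1 h2
    have h3 := hf0 ζ h1
    have : Real.log (1 - f ζ) ≤ 0 := Real.log_nonpos (by linarith [hfle ζ h1 h2]) (by linarith)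
    simp only [hg]; linarith
  have hgf : ∀ ζ : ℝ, 0 < ζ → ζ < δ → f ζ ≤ g ζ := by
    intro ζ h1 h2
    have h3 := hfle ζ h1 h2
    have : Real.log (1 - f ζ) ≤ (1 - f ζ) - 1 :=
      Real.log_le_sub_one_of_pos (by linarith)
    simp only [hg]; linarith
  have hgf2 : ∀ ζ : ℝ, 0 < ζ → ζ < δ → (1 - f ζ) * g ζ ≤ f ζ := by
    intro ζ h1 h2
    have h3 := hfle ζ h1 h2
    have h4 : (0:ℝ) < 1 - f ζ := by linarith
    have h5 : Real.log (1/(1 - f ζ)) ≤ 1/(1 - f ζ) - 1 :=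
      Real.log_le_sub_one_of_pos (by positivity)
    rw [Real.log_div one_ne_zero (ne_of_gt h4), Real.log_one] at h5
    have h6 : g ζ ≤ 1/(1 - f ζ) - 1 := by simp only [hg]; linarith
    have h7 : (1 - f ζ) * (1/(1 - f ζ) - 1) = f ζ := by field_simp; ring
    have h8 := mul_le_mul_of_nonneg_left h6 h4.le
    exact h8.trans_eq h7
  -- superadditivity of g near 0
  have hgsup : ∀ ξ : ℝ, 0 < ξ → ∀ ζ : ℝ, 0 < ζ → ξ + ζ < δ → g ξ + g ζ ≤ g (ξ + ζ) := by
    intro ξ hξ ζ hζ hsum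
    have hξδ : ξ < δ := by linarith
    have hζδ : ζ < δ := by linarith
    have h1 : f ξ ≤ 1/2 := hfle ξ hξ hξδ
    have h2 : f ζ ≤ 1/2 := hfle ζ hζ hζδ
    have h3 : f (ξ + ζ) ≤ 1/2 := hfle (ξ+ζ) (by linarith) hsum
    have key : 1 - f (ξ + ζ) ≤ (1 - f ξ) * (1 - f ζ) := by
      have := hsup ξ hξ ζ hζ
      nlinarith
    have hpos : (0:ℝ) < 1 - f (ξ + ζ) := by linarith
    have hlog : Real.log (1 - f (ξ + ζ)) ≤ Real.log ((1 - f ξ) * (1 - f ζ)) :=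
      Real.log_le_log hpos key
    rw [Real.log_mul (by linarith) (by linarith)] at hlog
    simp only [hg]; linarith
  -- iterated superadditivity
  have key1 : ∀ n : ℕ, ∀ s t : ℝ, 0 < s → 0 < t → t < δ → (n:ℝ) * s ≤ t → (n:ℝ) * g s ≤ g t := by
    intro n
    induction n with
    | zero => intro s t hs ht htδ _; simpa using hg0 t ht htδ
    | succ n ih =>
      intro s t hs ht htδ hns
      have hst : s ≤ t := by
        have hn0' : (0:ℝ) ≤ (n:ℝ) := Nat.cast_nonneg n
        have : (1:ℝ) ≤ (n:ℝ) + 1 := by linarith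
        push_cast at hns; nlinarith
      rcases eq_or_lt_of_le hst with heq | hlt
      · have hn0 : (n:ℝ) * s ≤ 0 := by push_cast at hns; nlinarith
        have : (n:ℝ) = 0 := by
          have hn : (0:ℝ) ≤ (n:ℝ) := Nat.cast_nonneg n
          nlinarith
        rw [heq]
        push_cast
        rw [this]
        simp
      · have hts : 0 < t - s := by linarith
        have h1 : g s + g (t - s) ≤ g t := by
          have := hgsup s hs (t - s) hts (by linarith)
          simpa using this
        have h2 : (n:ℝ) * g s ≤ g (t - s) := by
          apply ih s (t - s) hs hts (by linarith)
          push_cast at hns; linarith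
        push_cast; linarith
  -- the Fekete comparison
  have key2 : ∀ s t : ℝ, 0 < s → s < t → t < δ → (t - s) * g s ≤ s * g t := by
    intro s t hs hst htδ
    set n : ℕ := ⌊t / s⌋₊ with hn
    have hts : 0 ≤ t / s := le_of_lt (div_pos (hs.trans hst) hs)
    have h1 : (n:ℝ) ≤ t / s := Nat.floor_le hts
    have h2 : t / s < (n:ℝ) + 1 := Nat.lt_floor_add_one _
    have h3 : (n:ℝ) * s ≤ t := by
      rw [le_div_iff₀ hs] at h1; linarith
    have h4 : t < ((n:ℝ) + 1) * s := by
      rw [div_lt_iff₀ hs] at h2; linarith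
    have h5 : (n:ℝ) * g s ≤ g t := key1 n s t hs (by linarith) htδ h3
    have h6 : 0 ≤ g s := hg0 s hs (by linarith)
    nlinarith
  -- the candidate limit
  set S : Set ℝ := (fun t => g t / t) '' Set.Ioo 0 δ with hS
  have hSne : S.Nonempty := ⟨g (δ/2) / (δ/2), ⟨δ/2, ⟨by linarith, by linarith⟩, rfl⟩⟩
  have hSbd : BddBelow S := by
    refine ⟨0, ?_⟩
    rintro x ⟨t, ht, rfl⟩
    exact div_nonneg (hg0 t ht.1 ht.2) ht.1.le
  set L : ℝ := sInf S with hL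
  have hL0 : 0 ≤ L := le_csInf hSne (by rintro x ⟨t, ht, rfl⟩; exact div_nonneg (hg0 t ht.1 ht.2) ht.1.le)
  have hLle : ∀ t : ℝ, 0 < t → t < δ → L ≤ g t / t := by
    intro t h1 h2
    exact csInf_le hSbd ⟨t, ⟨h1, h2⟩, rfl⟩
  -- g ζ / ζ tends to L
  have hgten : Filter.Tendsto (fun ζ => g ζ / ζ) (nhdsWithin 0 (Set.Ioi 0)) (nhds L) := by
    rw [Metric.tendsto_nhdsWithin_nhds]
    intro ε hε
    obtain ⟨x, hxS, hxlt⟩ := Real.lt_sInf_add_pos hSne (half_pos hε)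
    obtain ⟨t, ht, rfl⟩ := hxS
    have ht1 : 0 < t := ht.1
    have ht2 : t < δ := ht.2
    have hLε : 0 < L + ε := by linarith
    refine ⟨min (t/2) (ε * t / (2 * (L + ε))), lt_min (by linarith) (by positivity), ?_⟩
    intro s hs hdist
    have hs0 : 0 < s := hs
    rw [Real.dist_eq, sub_zero, abs_of_pos hs0] at hdist
    have hs1 : s < t / 2 := lt_of_lt_of_le hdist (min_le_left _ _)
    have hs2 : s < ε * t / (2 * (L + ε)) := lt_of_lt_of_le hdist (min_le_right _ _)
    have hs2' : s * (2 * (L + ε)) < ε * t := by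
      rw [lt_div_iff₀ (by positivity)] at hs2
      linarith
    have hst : s < t := by linarith
    have hkey := key2 s t hs0 hst ht2
    have hgt : g t < (L + ε/2) * t := by
      have := hxlt
      rw [← hL] at this
      rw [div_lt_iff₀ ht1] at this
      linarith
    have hgs0 : 0 ≤ g s := hg0 s hs0 (by linarith)
    have hts : 0 < t - s := by linarith
    have hup : g s < (L + ε) * s := by
      have e1 : g s * (t - s) ≤ s * g t := by linarith [hkey]
      have e2 : s * g t < s * ((L + ε/2) * t) := mul_lt_mul_of_pos_left hgt hs0
      have e3 : s * ((L + ε/2) * t) < (L + ε) * s * (t - s) := by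
        nlinarith [mul_pos hs0 (show (0:ℝ) < ε * t - s * (2 * (L + ε)) by linarith)]
      have e4 : g s * (t - s) < (L + ε) * s * (t - s) :=
        lt_of_le_of_lt e1 (e2.trans e3)
      exact lt_of_mul_lt_mul_right e4 hts.le
    have hlo : L ≤ g s / s := hLle s hs0 (by linarith)
    rw [Real.dist_eq, abs_lt]
    refine ⟨by linarith, ?_⟩
    have : g s / s < L + ε := (div_lt_iff₀ hs0).mpr (by linarith)
    linarith
  -- f ζ → 0
  have hften : Filter.Tendsto f (nhdsWithin 0 (Set.Ioi 0)) (nhds 0) := by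
    have h1 : Filter.Tendsto (fun ζ : ℝ => M * ζ) (nhdsWithin 0 (Set.Ioi 0)) (nhds 0) := by
      have h2 : Filter.Tendsto (fun ζ : ℝ => M * ζ) (nhds 0) (nhds (M * 0)) :=
        ((continuous_const (y := M)).mul continuous_id).tendsto 0
      rw [mul_zero] at h2
      exact h2.mono_left nhdsWithin_le_nhds
    apply squeeze_zero' ?_ ?_ h1
    · filter_upwards [self_mem_nhdsWithin] with ζ hζ
      exact hf0 ζ hζ
    · filter_upwards [self_mem_nhdsWithin] with ζ hζ
      exact hfM ζ hζ
  -- squeeze f ζ / ζ between (1 - f ζ) * (g ζ / ζ) and g ζ / ζ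
  have hmem : Set.Ioo (0:ℝ) δ ∈ nhdsWithin (0:ℝ) (Set.Ioi 0) :=
    Ioo_mem_nhdsGT_of_mem ⟨le_refl 0, hδpos⟩
  have hlower : Filter.Tendsto (fun ζ => (1 - f ζ) * (g ζ / ζ)) (nhdsWithin 0 (Set.Ioi 0)) (nhds L) := by
    have h1 : Filter.Tendsto (fun ζ => 1 - f ζ) (nhdsWithin 0 (Set.Ioi 0)) (nhds 1) := by
      have := Filter.Tendsto.sub (tendsto_const_nhds (x := (1:ℝ))) hften
      simpa using this
    have := h1.mul hgten
    simpa using this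
  refine ⟨L, ?_⟩
  apply tendsto_of_tendsto_of_tendsto_of_le_of_le' hlower hgten
  · filter_upwards [hmem] with ζ hζ
    have h := hgf2 ζ hζ.1 hζ.2
    calc (1 - f ζ) * (g ζ / ζ) = ((1 - f ζ) * g ζ) / ζ := by ring
      _ ≤ f ζ / ζ := by gcongr; exact hζ.1.le
  · filter_upwards [hmem] with ζ hζ
    have h := hgf ζ hζ.1 hζ.2
    gcongr
    exact hζ.1.le
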